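/- arXiv:2109.12444 — 6 statements merged into one kernel-verified Lean document; each statement's English description precedes it below -/
import Mathlib

section
/- Let L be a Lie hyperalgebra over a hyperfield F, ρ a strongly regular equivalence relation on L, and δ a strongly regular equivalence relation on F. Then the quotient L/ρ, with operations x̄ ⊕ ȳ := z̄ for any z ∈ x + y, λ̃ ⊙ x̄ := z̄ for any z ∈ λ·x, and ⌊x̄, ȳ⌋ := z̄ for any z ∈ [x,y], is a well-defined Lie algebra over the field F/δ. -/
def ext2 {α : Type*} (f : α → α → Set α) (A B : Set α) : Set α :=
  ⋃ a ∈ A, ⋃ b ∈ B, f a b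

def IsSemihypergroup {α : Type*} (f : α → α → Set α) : Prop :=
  (∀ a b, (f a b).Nonempty) ∧ ∀ a b c, ext2 f (f a b) {c} = ext2 f {a} (f b c)

def IsHypergroup {α : Type*} (f : α → α → Set α) : Prop :=
  IsSemihypergroup f ∧ ∀ a, (⋃ b, f a b) = Set.univ ∧ (⋃ b, f b a) = Set.univ

structure LieHyperalgebra (F : Type*) (L : Type*) where
  fadd : F → F → Set F
  fmul : F → F → Set F
  fzero : F
  fone : F
  add : L → L → Set L
  smul : F → L → Set L
  zero : L
  bracket : L → L → Set L
  fadd_hypergroup : IsHypergroup fadd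
  fmul_semihypergroup : IsSemihypergroup fmul
  fmul_repro : ∀ a, a ≠ fzero → ∀ c, c ≠ fzero → (∃ b, c ∈ fmul a b) ∧ (∃ b, c ∈ fmul b a)
  fdistrib_left : ∀ a b c, (⋃ x ∈ fadd b c, fmul a x) = ext2 fadd (fmul a b) (fmul a c)
  fdistrib_right : ∀ a b c, (⋃ x ∈ fadd a b, fmul x c) = ext2 fadd (fmul a c) (fmul b c)
  add_hypergroup : IsHypergroup add
  smul_add : ∀ (a : F) (x y : L), (⋃ z ∈ add x y, smul a z) = ext2 add (smul a x) (smul a y)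
  add_smul : ∀ (a b : F) (x : L), (⋃ c ∈ fadd a b, smul c x) = ext2 add (smul a x) (smul b x)
  mul_smul : ∀ (a b : F) (x : L), (⋃ c ∈ fmul a b, smul c x) = ⋃ y ∈ smul b x, smul a y
  zero_smul : ∀ x, smul fzero x = {zero}
  one_smul : ∀ x, smul fone x = {x}
  bracket_bilin_left : ∀ (l1 l2 : F) (x1 x2 y : L),
    ext2 bracket (ext2 add (smul l1 x1) (smul l2 x2)) {y}
      = ext2 add (⋃ z ∈ bracket x1 y, smul l1 z) (⋃ z ∈ bracket x2 y, smul l2 z)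
  bracket_bilin_right : ∀ (l1 l2 : F) (x y1 y2 : L),
    ext2 bracket {x} (ext2 add (smul l1 y1) (smul l2 y2))
      = ext2 add (⋃ z ∈ bracket x y1, smul l1 z) (⋃ z ∈ bracket x y2, smul l2 z)
  bracket_refl : ∀ x, zero ∈ bracket x x
  jacobi : ∀ x y z, zero ∈ ext2 add
    (ext2 add (ext2 bracket {x} (bracket y z)) (ext2 bracket {y} (bracket z x)))
    (ext2 bracket {z} (bracket x y))

/-- Hypersum `A 0 + A 1 + ⋯ + A t` of finitely many sets w.r.t. a hyperoperation. -/
def hsumSet {α : Type*} (f : α → α → Set α) : ∀ {t : ℕ}, (Fin (t + 1) → Set α) → Set α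
  | 0, A => A 0
  | _ + 1, A => ext2 f (A 0) (hsumSet f (A ∘ Fin.succ))

/-- Hyperproduct `lam 0 · lam 1 ⋯ · lam q` of finitely many elements. -/
def hprod {α : Type*} (f : α → α → Set α) : ∀ {q : ℕ}, (Fin (q + 1) → α) → Set α
  | 0, lam => {lam 0}
  | _ + 1, lam => ext2 f {lam 0} (hprod f (lam ∘ Fin.succ))

/-- Formal hyperbracket expressions in `m` variables: arbitrary compositions of the
arguments using only the hyperbracket. -/
inductive BExpr : ℕ → Type
  | leaf {m : ℕ} : Fin m → BExpr m
  | br {m : ℕ} : BExpr m → BExpr m → BExpr m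

namespace LieHyperalgebra

variable {F L : Type*} (H : LieHyperalgebra F L)

def derivedSet : ℕ → Set L
  | 0 => Set.univ
  | i + 1 => ext2 H.bracket (derivedSet i) (derivedSet i)

/-- Evaluation of a hyperbracket expression on set-valued arguments. -/
def evalBExpr : ∀ {m : ℕ}, BExpr m → (Fin m → Set L) → Set L
  | _, .leaf j, g => g j
  | _, .br e₁ e₂, g => ext2 H.bracket (evalBExpr e₁ g) (evalBExpr e₂ g)

/-- The data occurring in the definition of the relation `𝒮ₙ`. -/
structure SData (n : ℕ) where
  t : ℕ
  σ : Equiv.Perm (Fin (t + 1))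
  m : Fin (t + 1) → ℕ
  f : ∀ i, BExpr (m i + 1)
  h : ∀ i, Fin (m i + 1) → L
  p : ∀ i, Fin (m i + 1) → ℕ
  q : ∀ i j, Fin (p i j + 1) → ℕ
  lam : ∀ i j k, Fin (q i j k + 1) → F
  σi : ∀ i, Equiv.Perm (Fin (m i + 1))
  σi_fix : ∀ i j, h i j ∉ H.derivedSet (n - 1) → σi i j = j
  σij : ∀ i j, Equiv.Perm (Fin (p i j + 1))
  σijk : ∀ i j k, Equiv.Perm (Fin (q i j k + 1))

namespace SData

variable {H} {n : ℕ} (d : SData H n)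

/-- `g_{ij} = (Σ_k Π_r λ_{ijkr}) · h_{ij}`. -/
def g (i : Fin (d.t + 1)) (j : Fin (d.m i + 1)) : Set L :=
  ⋃ c ∈ hsumSet H.fadd (fun k => hprod H.fmul (d.lam i j k)), H.smul c (d.h i j)

/-- `A_{ij} = Σ_k B_{ij σ_{ij}(k)}` with `B_{ijk} = Π_r λ_{ijk σ_{ijk}(r)}`. -/
def A (i : Fin (d.t + 1)) (j : Fin (d.m i + 1)) : Set F :=
  hsumSet H.fadd (fun k =>
    hprod H.fmul (fun r => d.lam i j (d.σij i j k) (d.σijk i j (d.σij i j k) r)))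

/-- `g'_{ij} = A_{σ(i) σ_{σ(i)}(j)} · h_{σ(i) σ_{σ(i)}(j)}`. -/
def g' (i : Fin (d.t + 1)) (j : Fin (d.m (d.σ i) + 1)) : Set L :=
  ⋃ c ∈ d.A (d.σ i) (d.σi (d.σ i) j), H.smul c (d.h (d.σ i) (d.σi (d.σ i) j))

/-- `Σ_i ℓ_i` where `ℓ_i = f_i(g_{i1},…,g_{im_i})`. -/
def lhs : Set L := hsumSet H.add (fun i => H.evalBExpr (d.f i) (d.g i))

/-- `Σ_i ℓ'_i` where `ℓ'_i = f_{σ(i)}(g'_{i1},…,g'_{im_{σ(i)}})`. -/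
def rhs : Set L := hsumSet H.add (fun i => H.evalBExpr (d.f (d.σ i)) (d.g' i))

end SData

/-- The relation `𝒮ₙ` on a Lie hyperalgebra. -/
def SRel (n : ℕ) (x y : L) : Prop := ∃ d : SData H n, x ∈ d.lhs ∧ y ∈ d.rhs

/-- Data for the relation `𝒜` (no restriction on the permutations `σᵢ`). -/
structure AData (F L : Type*) where
  t : ℕ
  σ : Equiv.Perm (Fin (t + 1))
  m : Fin (t + 1) → ℕ
  f : ∀ i, BExpr (m i + 1)
  h : ∀ i, Fin (m i + 1) → L
  p : ∀ i, Fin (m i + 1) → ℕ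
  q : ∀ i j, Fin (p i j + 1) → ℕ
  lam : ∀ i j k, Fin (q i j k + 1) → F
  σi : ∀ i, Equiv.Perm (Fin (m i + 1))
  σij : ∀ i j, Equiv.Perm (Fin (p i j + 1))
  σijk : ∀ i j k, Equiv.Perm (Fin (q i j k + 1))

variable {H}

def aG (d : AData F L) (i : Fin (d.t + 1)) (j : Fin (d.m i + 1)) : Set L :=
  ⋃ c ∈ hsumSet H.fadd (fun k => hprod H.fmul (d.lam i j k)), H.smul c (d.h i j)

def aA (d : AData F L) (i : Fin (d.t + 1)) (j : Fin (d.m i + 1)) : Set F :=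
  hsumSet H.fadd (fun k =>
    hprod H.fmul (fun r => d.lam i j (d.σij i j k) (d.σijk i j (d.σij i j k) r)))

def aG' (d : AData F L) (i : Fin (d.t + 1)) (j : Fin (d.m (d.σ i) + 1)) : Set L :=
  ⋃ c ∈ aA (H := H) d (d.σ i) (d.σi (d.σ i) j), H.smul c (d.h (d.σ i) (d.σi (d.σ i) j))

def aLhs (d : AData F L) : Set L :=
  hsumSet H.add (fun i => H.evalBExpr (d.f i) (aG (H := H) d i))

def aRhs (d : AData F L) : Set L :=
  hsumSet H.add (fun i => H.evalBExpr (d.f (d.σ i)) (aG' (H := H) d i))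

variable (H)

/-- The relation `𝒜` on a Lie hyperalgebra. -/
def ARel (x y : L) : Prop :=
  ∃ d : AData F L, x ∈ aLhs (H := H) d ∧ y ∈ aRhs (H := H) d

/-- Data for the fundamental relation `ℒ`. -/
structure LData (F L : Type*) where
  t : ℕ
  m : Fin (t + 1) → ℕ
  f : ∀ i, BExpr (m i + 1)
  h : ∀ i, Fin (m i + 1) → L
  p : ∀ i, Fin (m i + 1) → ℕ
  q : ∀ i j, Fin (p i j + 1) → ℕ
  lam : ∀ i j k, Fin (q i j k + 1) → F

variable {H}

def lG (d : LData F L) (i : Fin (d.t + 1)) (j : Fin (d.m i + 1)) : Set L :=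
  ⋃ c ∈ hsumSet H.fadd (fun k => hprod H.fmul (d.lam i j k)), H.smul c (d.h i j)

def lLhs (d : LData F L) : Set L :=
  hsumSet H.add (fun i => H.evalBExpr (d.f i) (lG (H := H) d i))

variable (H)

/-- The fundamental relation `ℒ`: `x ℒ y` iff `{x,y} ⊆ Σ ℓᵢ`. -/
def LRel (x y : L) : Prop := ∃ d : LData F L, x ∈ lLhs (H := H) d ∧ y ∈ lLhs (H := H) d

/-- Data for the relation `α` on the hyperfield `F`. -/
structure AlphaData (F : Type*) where
  t : ℕ
  σ : Equiv.Perm (Fin (t + 1))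
  k : Fin (t + 1) → ℕ
  σi : ∀ i, Equiv.Perm (Fin (k i + 1))
  xs : ∀ i, Fin (k i + 1) → F

/-- The relation `α` on the hyperfield `F`. -/
def alphaRel (a b : F) : Prop :=
  ∃ d : AlphaData F,
    a ∈ hsumSet H.fadd (fun i => hprod H.fmul (d.xs i)) ∧
    b ∈ hsumSet H.fadd (fun i => hprod H.fmul (fun j => d.xs (d.σ i) (d.σi (d.σ i) j)))

/-- `A ρ̄̄ B` : every element of `A` is related to every element of `B`. -/
def SetRel {α : Type*} (ρ : α → α → Prop) (A B : Set α) : Prop :=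
  ∀ a ∈ A, ∀ b ∈ B, ρ a b

/-- A strongly regular relation on a Lie hyperalgebra. -/
structure IsStronglyRegular (ρ : L → L → Prop) : Prop where
  add_left : ∀ x y a, ρ x y → SetRel ρ (H.add a x) (H.add a y)
  add_right : ∀ x y a, ρ x y → SetRel ρ (H.add x a) (H.add y a)
  smul : ∀ x y (c : F), ρ x y → SetRel ρ (H.smul c x) (H.smul c y)
  bracket_left : ∀ x y a, ρ x y → SetRel ρ (H.bracket a x) (H.bracket a y)
  bracket_right : ∀ x y a, ρ x y → SetRel ρ (H.bracket x a) (H.bracket y a)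

/-- A strongly regular relation on the hyperfield `F`. -/
structure IsStronglyRegularF (δ : F → F → Prop) : Prop where
  add_left : ∀ x y a, δ x y → SetRel δ (H.fadd a x) (H.fadd a y)
  add_right : ∀ x y a, δ x y → SetRel δ (H.fadd x a) (H.fadd y a)
  mul_left : ∀ x y a, δ x y → SetRel δ (H.fmul a x) (H.fmul a y)
  mul_right : ∀ x y a, δ x y → SetRel δ (H.fmul x a) (H.fmul y a)

end LieHyperalgebra


/-- The data of an induced Lie algebra structure on quotients `QF` of the hyperfield
and `QL` of the Lie hyperalgebra: well-defined single-valued operations induced by the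
hyperoperations (`x̄ ⊕ ȳ = z̄` for ANY `z ∈ x + y`, etc.) forming a Lie algebra. -/
structure QuotLieAlgebraWitness {F L : Type*} (H : LieHyperalgebra F L)
    (QF QL : Type*) (mkF : F → QF) (mkL : L → QL) [fieldQ : Field QF] where
  [lieRing : LieRing QL]
  [module : Module QF QL]
  [lieAlg : LieAlgebra QF QL]
  add_eq : ∀ x y : L, ∀ z ∈ H.add x y, mkL x + mkL y = mkL z
  smul_eq : ∀ (a : F) (x : L), ∀ z ∈ H.smul a x, mkF a • mkL x = mkL z
  bracket_eq : ∀ x y : L, ∀ z ∈ H.bracket x y, ⁅mkL x, mkL y⁆ = mkL z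


/-! ### Auxiliary development for the proof -/

theorem QLA.mk_eq_iff {α : Type*} {r : α → α → Prop} (h : Equivalence r) {a b : α} :
    Quot.mk r a = Quot.mk r b ↔ r a b := by
  constructor
  · intro hab
    have h2 : Relation.EqvGen r a b := Quot.eqvGen_exact hab
    exact (Equivalence.eqvGen_iff h).mp h2
  · exact Quot.sound

theorem QLA.mem_ext2 {α : Type*} {f : α → α → Set α} {A B : Set α} {z : α} :
    z ∈ ext2 f A B ↔ ∃ a ∈ A, ∃ b ∈ B, z ∈ f a b := by
  simp [ext2]

theorem QLA.ext2_singleton {α : Type*} (f : α → α → Set α) (a b : α) :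
    ext2 f {a} {b} = f a b := by
  ext z; simp [ext2]

open QLA in
/-- Bundled setup for the quotient construction. -/
structure QSetup (F L : Type*) where
  H : LieHyperalgebra F L
  ρ : L → L → Prop
  δ : F → F → Prop
  hρe : Equivalence ρ
  hδe : Equivalence δ
  hρ : H.IsStronglyRegular ρ
  hδ : H.IsStronglyRegularF δ
  [fQ : Field (Quot δ)]
  hfadd : ∀ a b : F, ∀ c ∈ H.fadd a b, Quot.mk δ a + Quot.mk δ b = Quot.mk δ c
  hfmul : ∀ a b : F, ∀ c ∈ H.fmul a b, Quot.mk δ a * Quot.mk δ b = Quot.mk δ c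

attribute [local instance] QSetup.fQ

namespace QSetup

open QLA LieHyperalgebra

variable {F L : Type*} (S : QSetup F L)

theorem add_ne (a b : L) : (S.H.add a b).Nonempty := S.H.add_hypergroup.1.1 a b
theorem fadd_ne (a b : F) : (S.H.fadd a b).Nonempty := S.H.fadd_hypergroup.1.1 a b
theorem fmul_ne (a b : F) : (S.H.fmul a b).Nonempty := S.H.fmul_semihypergroup.1 a b

theorem fadd_solve_right (a c : F) : ∃ b, c ∈ S.H.fadd a b := by
  have h := (S.H.fadd_hypergroup.2 a).1
  have hc : c ∈ ⋃ b, S.H.fadd a b := by rw [h]; trivial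
  simpa using hc

theorem add_solve_right (a c : L) : ∃ b, c ∈ S.H.add a b := by
  have h := (S.H.add_hypergroup.2 a).1
  have hc : c ∈ ⋃ b, S.H.add a b := by rw [h]; trivial
  simpa using hc

theorem add_solve_left (a c : L) : ∃ b, c ∈ S.H.add b a := by
  have h := (S.H.add_hypergroup.2 a).2
  have hc : c ∈ ⋃ b, S.H.add b a := by rw [h]; trivial
  simpa using hc

theorem smul_ne (a : F) (x : L) : (S.H.smul a x).Nonempty := by
  obtain ⟨c, hc⟩ := S.fadd_solve_right a S.H.fone
  have h := S.H.add_smul a c x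
  have hx : x ∈ ⋃ e ∈ S.H.fadd a c, S.H.smul e x := by
    refine Set.mem_biUnion hc ?_
    rw [S.H.one_smul]; exact rfl
  rw [h] at hx
  rcases mem_ext2.mp hx with ⟨u, hu, _, _, _⟩
  exact ⟨u, hu⟩

theorem bracket_ne (y z : L) : (S.H.bracket y z).Nonempty := by
  have hj := S.H.jacobi S.H.zero y z
  rcases mem_ext2.mp hj with ⟨s, hs, t, ht, hst⟩
  rcases mem_ext2.mp hs with ⟨u, hu, v, hv, huv⟩
  rcases mem_ext2.mp hu with ⟨x', hx', w, hw, hu'⟩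
  exact ⟨w, hw⟩

theorem rel_out {x : L} : S.ρ (Quot.out (Quot.mk S.ρ x)) x :=
  (mk_eq_iff S.hρe).mp (Quot.out_eq _)

theorem rel_outF {a : F} : S.δ (Quot.out (Quot.mk S.δ a)) a :=
  (mk_eq_iff S.hδe).mp (Quot.out_eq _)

/-! ### quotient addition -/

noncomputable def qadd (x y : Quot S.ρ) : Quot S.ρ :=
  Quot.mk S.ρ (S.add_ne x.out y.out).some

theorem add_congr {x x' y y' : L} (hx : S.ρ x x') (hy : S.ρ y y') :
    ∀ z ∈ S.H.add x y, ∀ z' ∈ S.H.add x' y', S.ρ z z' := by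
  intro z hz z' hz'
  obtain ⟨w, hw⟩ := S.add_ne x' y
  exact S.hρe.trans (S.hρ.add_right x x' y hx z hz w hw)
    (S.hρ.add_left y y' x' hy w hw z' hz')

theorem qadd_eq {x y z : L} (hz : z ∈ S.H.add x y) :
    S.qadd (Quot.mk S.ρ x) (Quot.mk S.ρ y) = Quot.mk S.ρ z :=
  Quot.sound (S.add_congr S.rel_out S.rel_out _ (Set.Nonempty.some_mem _) z hz)

/-! ### quotient bracket -/

noncomputable def qbr (x y : Quot S.ρ) : Quot S.ρ :=
  Quot.mk S.ρ (S.bracket_ne x.out y.out).some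

theorem bracket_congr {x x' y y' : L} (hx : S.ρ x x') (hy : S.ρ y y') :
    ∀ z ∈ S.H.bracket x y, ∀ z' ∈ S.H.bracket x' y', S.ρ z z' := by
  intro z hz z' hz'
  obtain ⟨w, hw⟩ := S.bracket_ne x' y
  exact S.hρe.trans (S.hρ.bracket_right x x' y hx z hz w hw)
    (S.hρ.bracket_left y y' x' hy w hw z' hz')

theorem qbr_eq {x y z : L} (hz : z ∈ S.H.bracket x y) :
    S.qbr (Quot.mk S.ρ x) (Quot.mk S.ρ y) = Quot.mk S.ρ z :=
  Quot.sound (S.bracket_congr S.rel_out S.rel_out _ (Set.Nonempty.some_mem _) z hz)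

/-! ### quotient scalar action (as a function of a hyperfield element) -/

noncomputable def qs (a : F) (x : Quot S.ρ) : Quot S.ρ :=
  Quot.mk S.ρ (S.smul_ne a x.out).some

theorem qs_eq {a : F} {x z : L} (hz : z ∈ S.H.smul a x) :
    S.qs a (Quot.mk S.ρ x) = Quot.mk S.ρ z :=
  Quot.sound (S.hρ.smul _ _ a S.rel_out _ (Set.Nonempty.some_mem _) z hz)

/-! ### the additive group structure on the quotient -/

theorem qadd_assoc (a b c : Quot S.ρ) :
    S.qadd (S.qadd a b) c = S.qadd a (S.qadd b c) := by
  induction a using Quot.ind with | _ a =>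
  induction b using Quot.ind with | _ b =>
  induction c using Quot.ind with | _ c =>
  obtain ⟨u, hu⟩ := S.add_ne a b
  obtain ⟨w, hw⟩ := S.add_ne u c
  have h1 : w ∈ ext2 S.H.add (S.H.add a b) {c} := mem_ext2.mpr ⟨u, hu, c, rfl, hw⟩
  rw [S.H.add_hypergroup.1.2 a b c] at h1
  rcases mem_ext2.mp h1 with ⟨a', ha', v, hv, hwv⟩
  rw [Set.mem_singleton_iff] at ha'; subst ha'
  rw [S.qadd_eq hu, S.qadd_eq hw, S.qadd_eq hv, S.qadd_eq hwv]

theorem qadd_solve_right (a c : Quot S.ρ) : ∃ b, S.qadd a b = c := by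
  induction a using Quot.ind with | _ a =>
  induction c using Quot.ind with | _ c =>
  obtain ⟨b, hb⟩ := S.add_solve_right a c
  exact ⟨Quot.mk S.ρ b, S.qadd_eq hb⟩

theorem qadd_solve_left (a c : Quot S.ρ) : ∃ b, S.qadd b a = c := by
  induction a using Quot.ind with | _ a =>
  induction c using Quot.ind with | _ c =>
  obtain ⟨b, hb⟩ := S.add_solve_left a c
  exact ⟨Quot.mk S.ρ b, S.qadd_eq hb⟩

noncomputable def qzero : Quot S.ρ :=
  (S.qadd_solve_left (Quot.mk S.ρ S.H.zero) (Quot.mk S.ρ S.H.zero)).choose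

theorem qzero_spec : S.qadd S.qzero (Quot.mk S.ρ S.H.zero) = Quot.mk S.ρ S.H.zero :=
  (S.qadd_solve_left (Quot.mk S.ρ S.H.zero) (Quot.mk S.ρ S.H.zero)).choose_spec

theorem qzero_add (b : Quot S.ρ) : S.qadd S.qzero b = b := by
  obtain ⟨x, hx⟩ := S.qadd_solve_right (Quot.mk S.ρ S.H.zero) b
  rw [← hx, ← S.qadd_assoc, S.qzero_spec]

noncomputable def qneg (b : Quot S.ρ) : Quot S.ρ :=
  (S.qadd_solve_left b S.qzero).choose

theorem qneg_add (b : Quot S.ρ) : S.qadd (S.qneg b) b = S.qzero :=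
  (S.qadd_solve_left b S.qzero).choose_spec

noncomputable def qAddGroup : AddGroup (Quot S.ρ) :=
  letI : Add (Quot S.ρ) := ⟨S.qadd⟩
  letI : Zero (Quot S.ρ) := ⟨S.qzero⟩
  letI : Neg (Quot S.ρ) := ⟨S.qneg⟩
  AddGroup.ofLeftAxioms S.qadd_assoc S.qzero_add S.qneg_add

attribute [local instance] qAddGroup

theorem mk_add_mk {x y z : L} (hz : z ∈ S.H.add x y) :
    Quot.mk S.ρ x + Quot.mk S.ρ y = Quot.mk S.ρ z := S.qadd_eq hz

/-! ### properties of `qs` -/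

theorem qs_fadd {a b c : F} (hc : c ∈ S.H.fadd a b) (x : Quot S.ρ) :
    S.qs c x = S.qs a x + S.qs b x := by
  induction x using Quot.ind with | _ x =>
  obtain ⟨v, hv⟩ := S.smul_ne c x
  have hv' : v ∈ ⋃ e ∈ S.H.fadd a b, S.H.smul e x := Set.mem_biUnion hc hv
  rw [S.H.add_smul a b x] at hv'
  rcases mem_ext2.mp hv' with ⟨u, hu, w, hw, hvw⟩
  rw [S.qs_eq hv, S.qs_eq hu, S.qs_eq hw]
  exact (S.mk_add_mk hvw).symm

theorem qs_fmul {a b c : F} (hc : c ∈ S.H.fmul a b) (x : Quot S.ρ) :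
    S.qs c x = S.qs a (S.qs b x) := by
  induction x using Quot.ind with | _ x =>
  obtain ⟨v, hv⟩ := S.smul_ne c x
  have hv' : v ∈ ⋃ e ∈ S.H.fmul a b, S.H.smul e x := Set.mem_biUnion hc hv
  rw [S.H.mul_smul a b x] at hv'
  rcases Set.mem_iUnion₂.mp hv' with ⟨y, hy, hvy⟩
  rw [S.qs_eq hv, S.qs_eq hy, S.qs_eq hvy]

theorem qs_add (a : F) (x y : Quot S.ρ) : S.qs a (x + y) = S.qs a x + S.qs a y := by
  induction x using Quot.ind with | _ x =>
  induction y using Quot.ind with | _ y =>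
  obtain ⟨w, hw⟩ := S.add_ne x y
  obtain ⟨v, hv⟩ := S.smul_ne a w
  have hv' : v ∈ ⋃ z ∈ S.H.add x y, S.H.smul a z := Set.mem_biUnion hw hv
  rw [S.H.smul_add a x y] at hv'
  rcases mem_ext2.mp hv' with ⟨u1, hu1, u2, hu2, h12⟩
  rw [S.mk_add_mk hw, S.qs_eq hv, S.qs_eq hu1, S.qs_eq hu2]
  exact (S.mk_add_mk h12).symm

theorem qs_one (x : Quot S.ρ) : S.qs S.H.fone x = x := by
  induction x using Quot.ind with | _ x =>
  have hx : x ∈ S.H.smul S.H.fone x := by rw [S.H.one_smul]; exact rfl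
  exact S.qs_eq hx

theorem qs_zero (x : Quot S.ρ) : S.qs S.H.fzero x = Quot.mk S.ρ S.H.zero := by
  induction x using Quot.ind with | _ x =>
  have hx : S.H.zero ∈ S.H.smul S.H.fzero x := by rw [S.H.zero_smul]; exact rfl
  exact S.qs_eq hx

theorem mk_zero : Quot.mk S.ρ S.H.zero = 0 := by
  have h := S.qs_add S.H.fzero 0 0
  rw [add_zero, S.qs_zero] at h
  exact left_eq_add.mp h

/-! ### independence of `qs` of the `δ`-class of the scalar -/

theorem qs_congr {a b : F} (hab : S.δ a b) (x : Quot S.ρ) : S.qs a x = S.qs b x := by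
  by_cases htriv : ∀ u v : Quot S.ρ, u = v
  · exact htriv _ _
  push_neg at htriv
  obtain ⟨u0, v0, huv⟩ := htriv
  have hone : S.H.fone ≠ S.H.fzero := by
    intro h
    apply huv
    have h1 : ∀ w : Quot S.ρ, w = Quot.mk S.ρ S.H.zero := by
      intro w; rw [← S.qs_one w, h, S.qs_zero]
    rw [h1 u0, h1 v0]
  have hconst : ∀ c : F, (∀ y : Quot S.ρ, S.qs c y = 0) → c = S.H.fzero := by
    intro c hc
    by_contra h
    obtain ⟨_, ⟨d, hd⟩⟩ := S.H.fmul_repro c h S.H.fone hone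
    apply huv
    calc u0 = S.qs S.H.fone u0 := (S.qs_one u0).symm
      _ = S.qs d (S.qs c u0) := S.qs_fmul hd u0
      _ = S.qs d (S.qs c v0) := by rw [hc u0, hc v0]
      _ = S.qs S.H.fone v0 := (S.qs_fmul hd v0).symm
      _ = v0 := S.qs_one v0
  obtain ⟨x0, hx0⟩ := S.fadd_solve_right S.H.fzero S.H.fzero
  have hsx0 : ∀ y : Quot S.ρ, S.qs x0 y = 0 := by
    intro y
    have h := S.qs_fadd hx0 y
    rw [S.qs_zero, S.mk_zero] at h
    exact (left_eq_add.mp h)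
  have hfz : Quot.mk S.δ S.H.fzero = 0 := by
    have h0 := hconst x0 hsx0
    have h := S.hfadd _ _ _ hx0
    rw [h0] at h
    exact (add_eq_left.mp h)
  have hfo : Quot.mk S.δ S.H.fone ≠ 0 := by
    intro hfo
    obtain ⟨w, hw⟩ := Quot.exists_rep (1 : Quot S.δ)
    obtain ⟨c', hc'⟩ := S.fmul_ne S.H.fone w
    have hmc' : Quot.mk S.δ c' = 0 := by
      rw [← S.hfmul _ _ _ hc', hfo, zero_mul]
    have hsc' : ∀ y : Quot S.ρ, S.qs c' y = S.qs w y := by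
      intro y; rw [S.qs_fmul hc', S.qs_one]
    obtain ⟨y0, hy0⟩ := S.fadd_solve_right c' w
    have hsy : ∀ y : Quot S.ρ, S.qs y0 y = 0 := by
      intro y
      have h := S.qs_fadd hy0 y
      rw [hsc'] at h
      exact left_eq_add.mp h
    have hy0z : y0 = S.H.fzero := hconst y0 hsy
    have h := S.hfadd _ _ _ hy0
    rw [hy0z, hfz, hmc', add_zero] at h
    rw [hw] at h
    exact one_ne_zero h.symm
  obtain ⟨c, hc⟩ := S.fadd_solve_right a b
  have hmc : Quot.mk S.δ c = 0 := by
    have h := S.hfadd _ _ _ hc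
    have hab' : Quot.mk S.δ a = Quot.mk S.δ b := Quot.sound hab
    rw [hab'] at h
    exact add_eq_left.mp h
  have hcz : c = S.H.fzero := by
    by_contra h
    obtain ⟨_, ⟨b1, hb1⟩⟩ := S.H.fmul_repro c h S.H.fone hone
    apply hfo
    rw [← S.hfmul _ _ _ hb1, hmc, mul_zero]
  have h := S.qs_fadd hc x
  rw [hcz, S.qs_zero, S.mk_zero, add_zero] at h
  exact h.symm

/-! ### the scalar multiplication by elements of the quotient field -/

noncomputable def qsmul (q : Quot S.δ) (x : Quot S.ρ) : Quot S.ρ := S.qs q.out x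

theorem qsmul_mk (a : F) (x : Quot S.ρ) : S.qsmul (Quot.mk S.δ a) x = S.qs a x :=
  S.qs_congr S.rel_outF x

theorem q_one_smul (x : Quot S.ρ) : S.qsmul 1 x = x := by
  obtain ⟨w, hw⟩ := Quot.exists_rep (1 : Quot S.δ)
  obtain ⟨c, hc⟩ := S.fmul_ne w S.H.fone
  have h2 : S.δ c S.H.fone := by
    apply (mk_eq_iff S.hδe).mp
    have h := S.hfmul _ _ _ hc
    rw [hw, one_mul] at h
    exact h.symm
  rw [← hw, S.qsmul_mk w x, ← S.qs_one x, ← S.qs_fmul hc, S.qs_congr h2, S.qs_one]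

theorem q_mul_smul (q1 q2 : Quot S.δ) (x : Quot S.ρ) :
    S.qsmul (q1 * q2) x = S.qsmul q1 (S.qsmul q2 x) := by
  induction q1 using Quot.ind with | _ a =>
  induction q2 using Quot.ind with | _ b =>
  obtain ⟨c, hc⟩ := S.fmul_ne a b
  rw [S.hfmul a b c hc, S.qsmul_mk c, S.qsmul_mk b, S.qsmul_mk a, S.qs_fmul hc]

theorem q_smul_add (q : Quot S.δ) (x y : Quot S.ρ) :
    S.qsmul q (x + y) = S.qsmul q x + S.qsmul q y := by
  induction q using Quot.ind with | _ a =>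
  rw [S.qsmul_mk a, S.qsmul_mk a, S.qsmul_mk a, S.qs_add]

theorem q_smul_zero (q : Quot S.δ) : S.qsmul q (0 : Quot S.ρ) = 0 := by
  induction q using Quot.ind with | _ a =>
  have h := S.qs_add a 0 0
  rw [add_zero] at h
  rw [S.qsmul_mk a]
  exact left_eq_add.mp h

theorem q_add_smul (q1 q2 : Quot S.δ) (x : Quot S.ρ) :
    S.qsmul (q1 + q2) x = S.qsmul q1 x + S.qsmul q2 x := by
  induction q1 using Quot.ind with | _ a =>
  induction q2 using Quot.ind with | _ b =>
  obtain ⟨c, hc⟩ := S.fadd_ne a b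
  rw [S.hfadd a b c hc, S.qsmul_mk c, S.qsmul_mk b, S.qsmul_mk a, S.qs_fadd hc]

theorem q_zero_smul (x : Quot S.ρ) : S.qsmul (0 : Quot S.δ) x = 0 := by
  obtain ⟨w, hw⟩ := Quot.exists_rep (0 : Quot S.δ)
  obtain ⟨c, hc⟩ := S.fadd_ne w w
  have hmc : S.δ c w := by
    apply (mk_eq_iff S.hδe).mp
    have h := S.hfadd _ _ _ hc
    rw [hw, add_zero] at h
    rw [hw]
    exact h.symm
  have h := S.qs_fadd hc x
  rw [S.qs_congr hmc x] at h
  rw [← hw, S.qsmul_mk w x]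
  exact left_eq_add.mp h

/-! ### commutativity of addition -/

theorem qadd_comm (x y : Quot S.ρ) : x + y = y + x := by
  have ha : S.qsmul ((1 : Quot S.δ) + 1) (x + y) = (x + y) + (x + y) := by
    rw [S.q_add_smul, S.q_one_smul]
  have hb : S.qsmul ((1 : Quot S.δ) + 1) (x + y) = (x + x) + (y + y) := by
    rw [S.q_smul_add, S.q_add_smul, S.q_add_smul, S.q_one_smul x, S.q_one_smul y,
      add_assoc, ← add_assoc (x : Quot S.ρ) x, ← add_assoc]
  have h3 : (x + x) + (y + y) = (x + y) + (x + y) := hb.symm.trans ha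
  rw [add_assoc, add_assoc] at h3
  have h4 := add_left_cancel h3
  rw [← add_assoc, ← add_assoc] at h4
  exact add_right_cancel h4

noncomputable def qAddCommGroup : AddCommGroup (Quot S.ρ) :=
  { S.qAddGroup with add_comm := S.qadd_comm }

/-! ### bracket laws -/

theorem biUnion_smul_one (B : Set L) : (⋃ z ∈ B, S.H.smul S.H.fone z) = B := by
  ext w
  simp [S.H.one_smul, eq_comm]

theorem bracket_dist_left (x y z : L) :
    ext2 S.H.bracket (S.H.add x y) {z}
      = ext2 S.H.add (S.H.bracket x z) (S.H.bracket y z) := by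
  have h := S.H.bracket_bilin_left S.H.fone S.H.fone x y z
  rw [S.H.one_smul x, S.H.one_smul y, ext2_singleton, S.biUnion_smul_one,
    S.biUnion_smul_one] at h
  exact h

theorem bracket_dist_right (x y z : L) :
    ext2 S.H.bracket {x} (S.H.add y z)
      = ext2 S.H.add (S.H.bracket x y) (S.H.bracket x z) := by
  have h := S.H.bracket_bilin_right S.H.fone S.H.fone x y z
  rw [S.H.one_smul y, S.H.one_smul z, ext2_singleton, S.biUnion_smul_one,
    S.biUnion_smul_one] at h
  exact h

theorem qbr_add_left (x y z : Quot S.ρ) :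
    S.qbr (x + y) z = S.qbr x z + S.qbr y z := by
  induction x using Quot.ind with | _ x =>
  induction y using Quot.ind with | _ y =>
  induction z using Quot.ind with | _ z =>
  obtain ⟨w, hw⟩ := S.add_ne x y
  obtain ⟨v, hv⟩ := S.bracket_ne w z
  have hv' : v ∈ ext2 S.H.bracket (S.H.add x y) {z} := mem_ext2.mpr ⟨w, hw, z, rfl, hv⟩
  rw [S.bracket_dist_left] at hv'
  rcases mem_ext2.mp hv' with ⟨p, hp, q, hq, hpq⟩
  rw [S.mk_add_mk hw, S.qbr_eq hv, S.qbr_eq hp, S.qbr_eq hq]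
  exact (S.mk_add_mk hpq).symm

theorem qbr_add_right (x y z : Quot S.ρ) :
    S.qbr x (y + z) = S.qbr x y + S.qbr x z := by
  induction x using Quot.ind with | _ x =>
  induction y using Quot.ind with | _ y =>
  induction z using Quot.ind with | _ z =>
  obtain ⟨w, hw⟩ := S.add_ne y z
  obtain ⟨v, hv⟩ := S.bracket_ne x w
  have hv' : v ∈ ext2 S.H.bracket {x} (S.H.add y z) := mem_ext2.mpr ⟨x, rfl, w, hw, hv⟩
  rw [S.bracket_dist_right] at hv'
  rcases mem_ext2.mp hv' with ⟨p, hp, q, hq, hpq⟩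
  rw [S.mk_add_mk hw, S.qbr_eq hv, S.qbr_eq hp, S.qbr_eq hq]
  exact (S.mk_add_mk hpq).symm

theorem qbr_self (x : Quot S.ρ) : S.qbr x x = 0 := by
  induction x using Quot.ind with | _ x =>
  rw [S.qbr_eq (S.H.bracket_refl x), S.mk_zero]

theorem qbr_smul (t : Quot S.δ) (x y : Quot S.ρ) :
    S.qbr x (S.qsmul t y) = S.qsmul t (S.qbr x y) := by
  induction t using Quot.ind with | _ l =>
  induction x using Quot.ind with | _ x =>
  induction y using Quot.ind with | _ y =>
  obtain ⟨u, hu⟩ := S.smul_ne l y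
  obtain ⟨w, hw⟩ := S.add_ne u S.H.zero
  obtain ⟨v, hv⟩ := S.bracket_ne x w
  have hw' : w ∈ ext2 S.H.add (S.H.smul l y) (S.H.smul S.H.fzero y) := by
    rw [S.H.zero_smul]; exact mem_ext2.mpr ⟨u, hu, S.H.zero, rfl, hw⟩
  have hv' : v ∈ ext2 S.H.bracket {x}
      (ext2 S.H.add (S.H.smul l y) (S.H.smul S.H.fzero y)) :=
    mem_ext2.mpr ⟨x, rfl, w, hw', hv⟩
  rw [S.H.bracket_bilin_right l S.H.fzero x y y] at hv'
  rcases mem_ext2.mp hv' with ⟨p, hp, q, hq, hpq⟩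
  rcases Set.mem_iUnion₂.mp hp with ⟨z1, hz1, hpz⟩
  rcases Set.mem_iUnion₂.mp hq with ⟨z2, hz2, hqz⟩
  rw [S.H.zero_smul] at hqz
  rw [Set.mem_singleton_iff] at hqz; subst hqz
  have e0 : Quot.mk S.ρ u = Quot.mk S.ρ w := by
    have h := S.mk_add_mk hw
    rw [S.mk_zero, add_zero] at h
    exact h
  have e1 : S.qsmul (Quot.mk S.δ l) (Quot.mk S.ρ y) = Quot.mk S.ρ w := by
    rw [S.qsmul_mk, S.qs_eq hu, e0]
  have e2 : Quot.mk S.ρ p = Quot.mk S.ρ v := by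
    have h := S.mk_add_mk hpq
    rw [S.mk_zero, add_zero] at h
    exact h
  rw [e1, S.qbr_eq hv, S.qsmul_mk, S.qbr_eq hz1, S.qs_eq hpz, e2]

theorem q_jacobi (x y z : Quot S.ρ) :
    S.qbr x (S.qbr y z) + S.qbr y (S.qbr z x) + S.qbr z (S.qbr x y) = 0 := by
  induction x using Quot.ind with | _ x =>
  induction y using Quot.ind with | _ y =>
  induction z using Quot.ind with | _ z =>
  have hj := S.H.jacobi x y z
  rcases mem_ext2.mp hj with ⟨s, hs, t, ht, hst⟩
  rcases mem_ext2.mp hs with ⟨u, hu, v, hv, huv⟩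
  rcases mem_ext2.mp hu with ⟨x', hx', w1, hw1, hu'⟩
  rcases mem_ext2.mp hv with ⟨y', hy', w2, hw2, hv'⟩
  rcases mem_ext2.mp ht with ⟨z', hz', w3, hw3, ht'⟩
  rw [Set.mem_singleton_iff] at hx' hy' hz'
  subst hx'; subst hy'; subst hz'
  rw [S.qbr_eq hw1, S.qbr_eq hu', S.qbr_eq hw2, S.qbr_eq hv', S.qbr_eq hw3, S.qbr_eq ht',
    S.mk_add_mk huv, S.mk_add_mk hst, S.mk_zero]

theorem qbr_zero_right (x : Quot S.ρ) : S.qbr x 0 = 0 := by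
  have h := S.qbr_add_right x 0 0
  rw [add_zero] at h
  exact left_eq_add.mp h

theorem qbr_neg_right (x y : Quot S.ρ) : S.qbr x (-y) = - S.qbr x y := by
  have h := S.qbr_add_right x y (-y)
  rw [add_neg_cancel, S.qbr_zero_right] at h
  exact (neg_eq_of_add_eq_zero_right h.symm).symm

theorem qbr_antisym (x y : Quot S.ρ) : S.qbr y x = - S.qbr x y := by
  have h : S.qbr (x + y) (x + y) = 0 := S.qbr_self _
  rw [S.qbr_add_left, S.qbr_add_right, S.qbr_add_right, S.qbr_self, S.qbr_self,
    zero_add, add_zero] at h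
  exact (neg_eq_of_add_eq_zero_right h).symm

theorem q_leibniz (x y z : Quot S.ρ) :
    S.qbr x (S.qbr y z) = S.qbr (S.qbr x y) z + S.qbr y (S.qbr x z) := by
  have J := S.q_jacobi x y z
  rw [add_assoc] at J
  have h2 := eq_neg_of_add_eq_zero_left J
  rw [show S.qbr (S.qbr x y) z = - S.qbr z (S.qbr x y) from S.qbr_antisym _ _,
    show S.qbr x z = - S.qbr z x from S.qbr_antisym _ _, S.qbr_neg_right, h2, neg_add_rev]

/-! ### the instances -/

noncomputable def qLieRing : LieRing (Quot S.ρ) :=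
  { S.qAddCommGroup with
    bracket := S.qbr
    add_lie := fun x y z => by exact S.qbr_add_left x y z
    lie_add := fun x y z => by exact S.qbr_add_right x y z
    lie_self := fun x => by exact S.qbr_self x
    leibniz_lie := fun x y z => by exact S.q_leibniz x y z }

noncomputable def qModule :
    @Module (Quot S.δ) (Quot S.ρ) _ S.qAddCommGroup.toAddCommMonoid :=
  letI := S.qAddCommGroup
  { smul := S.qsmul
    one_smul := fun x => by exact S.q_one_smul x
    mul_smul := fun q1 q2 x => by exact S.q_mul_smul q1 q2 x
    smul_zero := fun q => by exact S.q_smul_zero q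
    smul_add := fun q x y => by exact S.q_smul_add q x y
    add_smul := fun q1 q2 x => by exact S.q_add_smul q1 q2 x
    zero_smul := fun x => by exact S.q_zero_smul x }

noncomputable def qLieAlgebra :
    @LieAlgebra (Quot S.δ) (Quot S.ρ) _ S.qLieRing :=
  letI := S.qLieRing
  { toModule := S.qModule
    lie_smul := fun t x y => by exact S.qbr_smul t x y }

end QSetup

/-- If `ρ` is a strongly regular equivalence relation on a Lie hyperalgebra `L` and `δ`
a strongly regular equivalence relation on the hyperfield `F` (whose quotient `F/δ` is
a field with the induced operations), then the quotient `L/ρ` with the induced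
operations is a well-defined Lie algebra over `F/δ`. -/
theorem quotient_is_lieAlgebra_of_stronglyRegular {F L : Type*} (H : LieHyperalgebra F L)
    (ρ : L → L → Prop) (δ : F → F → Prop)
    (hρe : Equivalence ρ) (hδe : Equivalence δ)
    (hρ : H.IsStronglyRegular ρ) (hδ : H.IsStronglyRegularF δ)
    [fQ : Field (Quot δ)]
    (hfadd : ∀ a b : F, ∀ c ∈ H.fadd a b,
      Quot.mk δ a + Quot.mk δ b = Quot.mk δ c)
    (hfmul : ∀ a b : F, ∀ c ∈ H.fmul a b,
      Quot.mk δ a * Quot.mk δ b = Quot.mk δ c)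
 :
    Nonempty (QuotLieAlgebraWitness H (Quot δ) (Quot ρ) (Quot.mk δ) (Quot.mk ρ)) := by
  let S : QSetup F L := ⟨H, ρ, δ, hρe, hδe, hρ, hδ, hfadd, hfmul⟩
  letI : LieRing (Quot ρ) := S.qLieRing
  letI : Module (Quot δ) (Quot ρ) := S.qModule
  letI : LieAlgebra (Quot δ) (Quot ρ) := S.qLieAlgebra
  refine ⟨⟨?_, ?_, ?_⟩⟩
  · exact fun x y z hz => S.qadd_eq hz
  · exact fun a x z hz => (S.qsmul_mk a (Quot.mk ρ x)).trans (S.qs_eq hz)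
  · exact fun x y z hz => S.qbr_eq hz
end

section
/- Let L be a Lie hyperalgebra over a hyperfield F with strongly regular relation δ on F making F/δ a field. If an equivalence relation ρ on L makes the quotient L/ρ (with the induced single-valued operations) a Lie algebra over F/δ, then ρ is strongly regular. -/
/-- Conversely: if an equivalence relation `ρ` on a Lie hyperalgebra `L` is such that the
quotient `L/ρ`, with the induced single-valued operations, is a Lie algebra over the
field `F/δ` (where `δ` is strongly regular on `F`), then `ρ` is strongly regular. -/
theorem stronglyRegular_of_quotient_lieAlgebra {F L : Type*} (H : LieHyperalgebra F L)
    (ρ : L → L → Prop) (δ : F → F → Prop)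
    (hρe : Equivalence ρ) (hδe : Equivalence δ)
    (hδ : H.IsStronglyRegularF δ)
    [fQ : Field (Quot δ)]
    (hfadd : ∀ a b : F, ∀ c ∈ H.fadd a b,
      Quot.mk δ a + Quot.mk δ b = Quot.mk δ c)
    (hfmul : ∀ a b : F, ∀ c ∈ H.fmul a b,
      Quot.mk δ a * Quot.mk δ b = Quot.mk δ c)
    (w : QuotLieAlgebraWitness H (Quot δ) (Quot ρ) (Quot.mk δ) (Quot.mk ρ)) :
    H.IsStronglyRegular ρ := by
  have key : ∀ u v : L, Quot.mk ρ u = Quot.mk ρ v → ρ u v := by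
    intro u v h
    exact (Equivalence.eqvGen_iff hρe).mp (Quot.eq.mp h)
  have hxy : ∀ x y : L, ρ x y → Quot.mk ρ x = Quot.mk ρ y := fun x y h => Quot.sound h
  constructor
  · intro x y a h u hu v hv
    exact key u v (by rw [← w.add_eq a x u hu, ← w.add_eq a y v hv, hxy x y h])
  · intro x y a h u hu v hv
    exact key u v (by rw [← w.add_eq x a u hu, ← w.add_eq y a v hv, hxy x y h])
  · intro x y c h u hu v hv
    exact key u v (by rw [← w.smul_eq c x u hu, ← w.smul_eq c y v hv, hxy x y h])
  · intro x y a h u hu v hv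
    exact key u v (by rw [← w.bracket_eq a x u hu, ← w.bracket_eq a y v hv, hxy x y h])
  · intro x y a h u hu v hv
    exact key u v (by rw [← w.bracket_eq x a u hu, ← w.bracket_eq y a v hv, hxy x y h])
end

section
/- For every n ≥ 1, the relation S_n on a Lie hyperalgebra L is reflexive and symmetric, and the relations are nested: L ⊆ S_{n+1} ⊆ S_n ⊆ S_1 = A, where L is the fundamental relation and A is the relation defining the abelian quotient. -/
namespace LieHyperalgebra

variable {F L : Type*} {H : LieHyperalgebra F L} {n : ℕ}

lemma derivedSet_succ_subset (i : ℕ) : H.derivedSet (i + 1) ⊆ H.derivedSet i := by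
  induction i with
  | zero => intro x _; exact Set.mem_univ x
  | succ i ih =>
    intro x hx
    rw [show H.derivedSet (i + 1 + 1) = ext2 H.bracket (H.derivedSet (i + 1)) (H.derivedSet (i + 1)) from rfl] at hx
    rw [show H.derivedSet (i + 1) = ext2 H.bracket (H.derivedSet i) (H.derivedSet i) from rfl]
    simp only [ext2, Set.mem_iUnion] at hx ⊢
    obtain ⟨a, ha, b, hb, h⟩ := hx
    exact ⟨a, ih ha, b, ih hb, h⟩

/-- The trivial `LData` whose sum is `{x}`. -/
def trivLData (x : L) : LData F L where
  t := 0
  m := fun _ => 0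
  f := fun _ => .leaf 0
  h := fun _ _ => x
  p := fun _ _ => 0
  q := fun _ _ _ => 0
  lam := fun _ _ _ _ => H.fone

lemma mem_trivLData (x : L) : x ∈ lLhs (H := H) (trivLData (H := H) x) := by
  simp [lLhs, trivLData, lG, hsumSet, hprod, evalBExpr, H.one_smul]

/-- Turn `LData` into `SData` with identity permutations. -/
def idSData (d : LData F L) : SData H n where
  t := d.t
  σ := 1
  m := d.m
  f := d.f
  h := d.h
  p := d.p
  q := d.q
  lam := d.lam
  σi := fun _ => 1
  σi_fix := fun _ _ _ => rfl
  σij := fun _ _ => 1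
  σijk := fun _ _ _ => 1

lemma idSData_lhs (d : LData F L) : (idSData (H := H) (n := n) d).lhs = lLhs (H := H) d := rfl

lemma idSData_rhs (d : LData F L) : (idSData (H := H) (n := n) d).rhs = lLhs (H := H) d := rfl

/-- The data witnessing symmetry of `𝒮ₙ`. -/
def symmSData (d : SData H n) : SData H n where
  t := d.t
  σ := d.σ⁻¹
  m := fun i => d.m (d.σ i)
  f := fun i => d.f (d.σ i)
  h := fun i j => d.h (d.σ i) (d.σi (d.σ i) j)
  p := fun i j => d.p (d.σ i) (d.σi (d.σ i) j)
  q := fun i j k => d.q (d.σ i) (d.σi (d.σ i) j) (d.σij (d.σ i) (d.σi (d.σ i) j) k)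
  lam := fun i j k r => d.lam (d.σ i) (d.σi (d.σ i) j) (d.σij (d.σ i) (d.σi (d.σ i) j) k)
    (d.σijk (d.σ i) (d.σi (d.σ i) j) (d.σij (d.σ i) (d.σi (d.σ i) j) k) r)
  σi := fun i => (d.σi (d.σ i))⁻¹
  σi_fix := fun i j hj => by
    have h1 := d.σi_fix (d.σ i) (d.σi (d.σ i) j) hj
    have h2 : d.σi (d.σ i) j = j := (d.σi (d.σ i)).injective h1
    rw [Equiv.Perm.inv_eq_iff_eq]
    exact h2.symm
  σij := fun i j => (d.σij (d.σ i) (d.σi (d.σ i) j))⁻¹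
  σijk := fun i j k => (d.σijk (d.σ i) (d.σi (d.σ i) j) (d.σij (d.σ i) (d.σi (d.σ i) j) k))⁻¹

lemma symmSData_lhs (d : SData H n) : (symmSData d).lhs = d.rhs := rfl

lemma symmSData_rhs (d : SData H n) : (symmSData d).rhs = d.lhs := by
  show hsumSet H.add _ = hsumSet H.add _
  refine congrArg _ (funext fun i => ?_)
  have hg : ∀ j, (symmSData d).g' i j = d.g (d.σ (d.σ⁻¹ i)) j := by
    intro j
    have hA : (symmSData d).A ((symmSData d).σ i) ((symmSData d).σi ((symmSData d).σ i) j)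
        = hsumSet H.fadd (fun k => hprod H.fmul
            (d.lam (d.σ (d.σ⁻¹ i)) (d.σi (d.σ (d.σ⁻¹ i)) ((d.σi (d.σ (d.σ⁻¹ i)))⁻¹ j)) k)) := by
      refine congrArg _ (funext fun k => ?_)
      set I := d.σ (d.σ⁻¹ i)
      set J := d.σi I ((d.σi I)⁻¹ j)
      show hprod H.fmul (fun r => d.lam I J (d.σij I J ((d.σij I J)⁻¹ k))
          (d.σijk I J (d.σij I J ((d.σij I J)⁻¹ k))
            ((d.σijk I J (d.σij I J ((d.σij I J)⁻¹ k)))⁻¹ r)))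
        = hprod H.fmul (d.lam I J k)
      have e1 : hprod H.fmul (fun r => d.lam I J (d.σij I J ((d.σij I J)⁻¹ k))
          (d.σijk I J (d.σij I J ((d.σij I J)⁻¹ k))
            ((d.σijk I J (d.σij I J ((d.σij I J)⁻¹ k)))⁻¹ r)))
          = hprod H.fmul (d.lam I J (d.σij I J ((d.σij I J)⁻¹ k))) :=
        congrArg _ (funext fun r => congrArg _ (Equiv.apply_symm_apply _ r))
      refine e1.trans ?_
      exact congrArg (fun X => hprod H.fmul (d.lam I J X)) (Equiv.apply_symm_apply _ k)
    show (⋃ c ∈ (symmSData d).A ((symmSData d).σ i) ((symmSData d).σi ((symmSData d).σ i) j),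
        H.smul c (d.h (d.σ (d.σ⁻¹ i)) (d.σi (d.σ (d.σ⁻¹ i)) ((d.σi (d.σ (d.σ⁻¹ i)))⁻¹ j)))) = _
    rw [hA]
    exact congrArg (d.g (d.σ (d.σ⁻¹ i))) (Equiv.apply_symm_apply _ j)
  show H.evalBExpr (d.f (d.σ (d.σ⁻¹ i))) ((symmSData d).g' i) = H.evalBExpr (d.f i) (d.g i)
  rw [funext hg]
  exact congrArg (fun I => H.evalBExpr (d.f I) (d.g I)) (Equiv.apply_symm_apply d.σ i)

end LieHyperalgebra



/-- For every `n ≥ 1`, the relation `𝒮ₙ` on a Lie hyperalgebra is reflexive and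
symmetric, and the relations are nested:
`ℒ ⊆ 𝒮ₙ₊₁ ⊆ 𝒮ₙ ⊆ 𝒮₁ = 𝒜`. -/
theorem LieHyperalgebra.SRel_refl_symm_nested {F L : Type*}
    (H : LieHyperalgebra F L) (n : ℕ) (hn : 1 ≤ n) :
    (∀ x : L, H.SRel n x x) ∧
    (∀ x y : L, H.SRel n x y → H.SRel n y x) ∧
    (∀ x y : L, H.LRel x y → H.SRel (n + 1) x y) ∧
    (∀ x y : L, H.SRel (n + 1) x y → H.SRel n x y) ∧
    (∀ x y : L, H.SRel 1 x y ↔ H.ARel x y) := by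
  have hsub : H.derivedSet n ⊆ H.derivedSet (n - 1) := by
    have h1 := derivedSet_succ_subset (H := H) (n - 1)
    rwa [show n - 1 + 1 = n from by omega] at h1
  refine ⟨?_, ?_, ?_, ?_, ?_⟩
  · intro x
    exact ⟨idSData (trivLData x), mem_trivLData x, mem_trivLData x⟩
  · rintro x y ⟨d, hx, hy⟩
    exact ⟨symmSData d, by rw [symmSData_lhs]; exact hy, by rw [symmSData_rhs]; exact hx⟩
  · rintro x y ⟨d, hx, hy⟩
    exact ⟨idSData d, hx, hy⟩
  · rintro x y ⟨d, hx, hy⟩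
    exact ⟨⟨d.t, d.σ, d.m, d.f, d.h, d.p, d.q, d.lam, d.σi,
      fun i j hj => d.σi_fix i j fun hmem => hj (hsub hmem), d.σij, d.σijk⟩, hx, hy⟩
  · intro x y
    constructor
    · rintro ⟨d, hx, hy⟩
      exact ⟨⟨d.t, d.σ, d.m, d.f, d.h, d.p, d.q, d.lam, d.σi, d.σij, d.σijk⟩, hx, hy⟩
    · rintro ⟨d, hx, hy⟩
      exact ⟨⟨d.t, d.σ, d.m, d.f, d.h, d.p, d.q, d.lam, d.σi,
        fun i j hj => absurd (Set.mem_univ _) hj, d.σij, d.σijk⟩, hx, hy⟩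
end

section
/- Let L be a Lie hyperalgebra over a hyperfield F (with char(F/α*) ≠ 2) and n ≥ 1. Then the i-th derived subalgebra of the quotient Lie algebra satisfies (L/S_n*)^{(i)} = ⟨S_n*(h) : h ∈ L^{[i]}⟩ for all i ≥ 0, i.e., it is spanned by the classes of elements of L^{[i]}. -/
/-- In a Lie hyperalgebra every hyperbracket is nonempty. -/
lemma LieHyperalgebra.bracket_nonempty {F L : Type*} (H : LieHyperalgebra F L)
    (a b : L) : (H.bracket a b).Nonempty := by
  obtain ⟨y, hy⟩ : ∃ y, b ∈ H.add a y := by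
    have h1 := (H.add_hypergroup.2 a).1
    have h2 : b ∈ (⋃ y, H.add a y) := by rw [h1]; trivial
    simpa using h2
  have key := H.bracket_bilin_left H.fone H.fone a y b
  rw [H.one_smul, H.one_smul] at key
  have hzero : H.zero ∈ ext2 H.bracket (ext2 H.add {a} {y}) {b} := by
    simp only [ext2, Set.mem_iUnion]
    exact ⟨b, ⟨a, rfl, y, rfl, hy⟩, b, rfl, H.bracket_refl b⟩
  rw [key] at hzero
  simp only [ext2, Set.mem_iUnion, H.one_smul, Set.mem_singleton_iff] at hzero
  obtain ⟨p, ⟨z, hz, _⟩, _⟩ := hzero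
  exact ⟨z, hz⟩

/-- For a Lie hyperalgebra `L` over a hyperfield `F` (with `char(F/α*) ≠ 2`) and `n ≥ 1`,
the `i`-th derived subalgebra of the quotient Lie algebra `L/𝒮ₙ*` is spanned by the
classes of the elements of `L^{[i]}`:
`(L/𝒮ₙ*)^{(i)} = ⟨𝒮ₙ*(h) : h ∈ L^{[i]}⟩` for all `i ≥ 0`. -/
theorem LieHyperalgebra.derivedSeries_quotient_eq_span {F L : Type*}
    (H : LieHyperalgebra F L) (n : ℕ) (hn : 1 ≤ n)
    [fQ : Field (Quot (Relation.TransGen H.alphaRel))]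
    (hfadd : ∀ a b : F, ∀ c ∈ H.fadd a b,
      Quot.mk (Relation.TransGen H.alphaRel) a + Quot.mk (Relation.TransGen H.alphaRel) b
        = Quot.mk (Relation.TransGen H.alphaRel) c)
    (hfmul : ∀ a b : F, ∀ c ∈ H.fmul a b,
      Quot.mk (Relation.TransGen H.alphaRel) a * Quot.mk (Relation.TransGen H.alphaRel) b
        = Quot.mk (Relation.TransGen H.alphaRel) c)
    (hchar : (2 : Quot (Relation.TransGen H.alphaRel)) ≠ 0)
    [lieRing : LieRing (Quot (Relation.TransGen (H.SRel n)))]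
    [module : Module (Quot (Relation.TransGen H.alphaRel))
      (Quot (Relation.TransGen (H.SRel n)))]
    [lieAlg : LieAlgebra (Quot (Relation.TransGen H.alphaRel))
      (Quot (Relation.TransGen (H.SRel n)))]
    (hadd : ∀ x y : L, ∀ z ∈ H.add x y,
      Quot.mk (Relation.TransGen (H.SRel n)) x + Quot.mk (Relation.TransGen (H.SRel n)) y
        = Quot.mk (Relation.TransGen (H.SRel n)) z)
    (hsmul : ∀ (a : F) (x : L), ∀ z ∈ H.smul a x,
      Quot.mk (Relation.TransGen H.alphaRel) a • Quot.mk (Relation.TransGen (H.SRel n)) x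
        = Quot.mk (Relation.TransGen (H.SRel n)) z)
    (hbracket : ∀ x y : L, ∀ z ∈ H.bracket x y,
      ⁅Quot.mk (Relation.TransGen (H.SRel n)) x, Quot.mk (Relation.TransGen (H.SRel n)) y⁆
        = Quot.mk (Relation.TransGen (H.SRel n)) z)
 :
    ∀ i : ℕ,
      (LieAlgebra.derivedSeries (Quot (Relation.TransGen H.alphaRel))
          (Quot (Relation.TransGen (H.SRel n))) i : Set (Quot (Relation.TransGen (H.SRel n))))
        = (Submodule.span (Quot (Relation.TransGen H.alphaRel))
            (Quot.mk (Relation.TransGen (H.SRel n)) '' H.derivedSet i) :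
              Submodule (Quot (Relation.TransGen H.alphaRel))
                (Quot (Relation.TransGen (H.SRel n)))) := by
  -- Abbreviation-free names for the two quotient maps.
  -- Step 0: auxiliary facts derived from the hyperalgebra axioms.
  have hsmulne : ∀ (l : F) (x : L), (H.smul l x).Nonempty := by
    intro l x
    obtain ⟨b, hb⟩ : ∃ b, H.fone ∈ H.fadd l b := by
      have h1 := (H.fadd_hypergroup.2 l).1
      have h2 : H.fone ∈ (⋃ b, H.fadd l b) := by rw [h1]; trivial
      simpa using h2
    have key := H.add_smul l b x
    have hx : x ∈ (⋃ c ∈ H.fadd l b, H.smul c x) := by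
      refine Set.mem_biUnion hb ?_
      rw [H.one_smul]; rfl
    rw [key] at hx
    simp only [ext2, Set.mem_iUnion] at hx
    obtain ⟨p, hp, -⟩ := hx
    exact ⟨p, hp⟩
  have hπzero : Quot.mk (Relation.TransGen (H.SRel n)) H.zero
      = (0 : Quot (Relation.TransGen (H.SRel n))) := by
    have h0 : ∀ x : L, Quot.mk (Relation.TransGen H.alphaRel) H.fzero •
        Quot.mk (Relation.TransGen (H.SRel n)) x
          = Quot.mk (Relation.TransGen (H.SRel n)) H.zero :=
      fun x => hsmul H.fzero x H.zero (by rw [H.zero_smul]; rfl)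
    by_cases hκ : Quot.mk (Relation.TransGen H.alphaRel) H.fzero = 0
    · have h1 := h0 H.zero
      rw [hκ, _root_.zero_smul] at h1
      exact h1.symm
    · have hconst : ∀ x y : L, Quot.mk (Relation.TransGen (H.SRel n)) x
          = Quot.mk (Relation.TransGen (H.SRel n)) y := by
        intro x y
        have hxy := (h0 x).trans (h0 y).symm
        calc Quot.mk (Relation.TransGen (H.SRel n)) x
            = (Quot.mk (Relation.TransGen H.alphaRel) H.fzero)⁻¹ •
              (Quot.mk (Relation.TransGen H.alphaRel) H.fzero •
                Quot.mk (Relation.TransGen (H.SRel n)) x) := (inv_smul_smul₀ hκ _).symm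
          _ = (Quot.mk (Relation.TransGen H.alphaRel) H.fzero)⁻¹ •
              (Quot.mk (Relation.TransGen H.alphaRel) H.fzero •
                Quot.mk (Relation.TransGen (H.SRel n)) y) := by rw [hxy]
          _ = Quot.mk (Relation.TransGen (H.SRel n)) y := inv_smul_smul₀ hκ _
      obtain ⟨x0, hx0⟩ := Quot.mk_surjective (0 : Quot (Relation.TransGen (H.SRel n)))
      rw [← hx0]
      exact hconst H.zero x0
  have hsl : ∀ (c : Quot (Relation.TransGen H.alphaRel))
      (u v : Quot (Relation.TransGen (H.SRel n))), ⁅c • u, v⁆ = c • ⁅u, v⁆ := by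
    intro c u v
    obtain ⟨l, rfl⟩ := Quot.mk_surjective c
    obtain ⟨a, rfl⟩ := Quot.mk_surjective u
    obtain ⟨b, rfl⟩ := Quot.mk_surjective v
    obtain ⟨w, hw⟩ := hsmulne l a
    obtain ⟨u', hu'⟩ := H.add_hypergroup.1.1 w H.zero
    obtain ⟨z'', hz''⟩ := H.bracket_nonempty u' b
    have bilin := H.bracket_bilin_left l H.fzero a a b
    rw [H.zero_smul] at bilin
    have hmem : z'' ∈ ext2 H.bracket (ext2 H.add (H.smul l a) {H.zero}) {b} := by
      simp only [ext2, Set.mem_iUnion]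
      exact ⟨u', ⟨w, hw, H.zero, rfl, hu'⟩, b, rfl, hz''⟩
    rw [bilin] at hmem
    simp only [ext2, Set.mem_iUnion, H.zero_smul, Set.mem_singleton_iff] at hmem
    obtain ⟨p, ⟨z', hz', hpz⟩, q, ⟨z₂, hz₂, hqz⟩, hpq⟩ := hmem
    subst hqz
    have e2 : Quot.mk (Relation.TransGen (H.SRel n)) w
        = Quot.mk (Relation.TransGen (H.SRel n)) u' := by
      have h1 := hadd w H.zero u' hu'
      rwa [hπzero, add_zero] at h1
    have e4 : Quot.mk (Relation.TransGen (H.SRel n)) p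
        = Quot.mk (Relation.TransGen (H.SRel n)) z'' := by
      have h1 := hadd p H.zero z'' hpq
      rwa [hπzero, add_zero] at h1
    calc ⁅Quot.mk (Relation.TransGen H.alphaRel) l • Quot.mk (Relation.TransGen (H.SRel n)) a,
          Quot.mk (Relation.TransGen (H.SRel n)) b⁆
        = ⁅Quot.mk (Relation.TransGen (H.SRel n)) u',
            Quot.mk (Relation.TransGen (H.SRel n)) b⁆ := by rw [hsmul l a w hw, e2]
      _ = Quot.mk (Relation.TransGen (H.SRel n)) z'' := hbracket u' b z'' hz''
      _ = Quot.mk (Relation.TransGen (H.SRel n)) p := e4.symm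
      _ = Quot.mk (Relation.TransGen H.alphaRel) l •
            Quot.mk (Relation.TransGen (H.SRel n)) z' := (hsmul l z' p hpz).symm
      _ = Quot.mk (Relation.TransGen H.alphaRel) l •
            ⁅Quot.mk (Relation.TransGen (H.SRel n)) a,
              Quot.mk (Relation.TransGen (H.SRel n)) b⁆ := by rw [hbracket a b z' hz']
  have hls : ∀ (c : Quot (Relation.TransGen H.alphaRel))
      (u v : Quot (Relation.TransGen (H.SRel n))), ⁅u, c • v⁆ = c • ⁅u, v⁆ := by
    intro c u v
    calc ⁅u, c • v⁆ = -⁅c • v, u⁆ := (lie_skew _ _).symm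
      _ = -(c • ⁅v, u⁆) := by rw [hsl]
      _ = c • -⁅v, u⁆ := (smul_neg _ _).symm
      _ = c • ⁅u, v⁆ := by rw [lie_skew]
  intro i
  induction i with
  | zero =>
    have himg : Quot.mk (Relation.TransGen (H.SRel n)) '' H.derivedSet 0 = Set.univ := by
      simp [LieHyperalgebra.derivedSet, Set.image_univ,
        (Quot.mk_surjective (r := Relation.TransGen (H.SRel n))).range_eq]
    rw [himg, Submodule.span_univ]
    simp [LieAlgebra.derivedSeries_def, LieAlgebra.derivedSeriesOfIdeal_zero]
  | succ i ih =>
    set D := LieAlgebra.derivedSeries (Quot (Relation.TransGen H.alphaRel))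
      (Quot (Relation.TransGen (H.SRel n))) i with hD
    have ihmem : ∀ x : Quot (Relation.TransGen (H.SRel n)), x ∈ D ↔
        x ∈ Submodule.span (Quot (Relation.TransGen H.alphaRel))
          (Quot.mk (Relation.TransGen (H.SRel n)) '' H.derivedSet i) := by
      intro x
      rw [← SetLike.mem_coe (p := D), ih, SetLike.mem_coe]
    set T : Set (Quot (Relation.TransGen (H.SRel n))) :=
      {m | ∃ x ∈ D, ∃ y ∈ D, ⁅x, y⁆ = m} with hT
    -- T is contained in the target span
    have hTspan : T ⊆ (Submodule.span (Quot (Relation.TransGen H.alphaRel))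
        (Quot.mk (Relation.TransGen (H.SRel n)) '' H.derivedSet (i + 1)) :
          Set (Quot (Relation.TransGen (H.SRel n)))) := by
      rintro m ⟨x, hx, y, hy, rfl⟩
      rw [ihmem] at hx hy
      induction hx, hy using Submodule.span_induction₂ with
      | mem_mem u v hu hv =>
        obtain ⟨a, ha, rfl⟩ := hu
        obtain ⟨b, hb, rfl⟩ := hv
        obtain ⟨z, hz⟩ := H.bracket_nonempty a b
        rw [hbracket a b z hz]
        apply Submodule.subset_span
        refine ⟨z, ?_, rfl⟩
        show z ∈ ext2 H.bracket (H.derivedSet i) (H.derivedSet i)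
        exact Set.mem_iUnion.2 ⟨a, Set.mem_iUnion.2 ⟨ha,
          Set.mem_iUnion.2 ⟨b, Set.mem_iUnion.2 ⟨hb, hz⟩⟩⟩⟩
      | zero_left v hv => simp
      | zero_right u hu => simp
      | add_left u v w hu hv hw h1 h2 =>
        rw [add_lie]; exact Submodule.add_mem _ h1 h2
      | add_right u v w hu hv hw h1 h2 =>
        rw [lie_add]; exact Submodule.add_mem _ h1 h2
      | smul_left c u v hu hv h1 =>
        rw [hsl]; exact Submodule.smul_mem _ _ h1
      | smul_right c u v hu hv h1 =>
        rw [hls]; exact Submodule.smul_mem _ _ h1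
    have hsucc : LieAlgebra.derivedSeries (Quot (Relation.TransGen H.alphaRel))
        (Quot (Relation.TransGen (H.SRel n))) (i + 1) = ⁅D, D⁆ := by
      rw [hD, LieAlgebra.derivedSeries_def, LieAlgebra.derivedSeries_def,
        LieAlgebra.derivedSeriesOfIdeal_succ]
    -- (A1) the derived ideal is contained in the additive closure of T
    have hA1 : ∀ m, m ∈ LieAlgebra.derivedSeries (Quot (Relation.TransGen H.alphaRel))
        (Quot (Relation.TransGen (H.SRel n))) (i + 1) → m ∈ AddSubmonoid.closure T := by
      letI : Module (Quot (Relation.TransGen H.alphaRel))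
        (Quot (Relation.TransGen (H.SRel n))) := lieAlg.toModule
      intro m hm
      rw [hsucc, ← LieSubmodule.mem_toSubmodule,
        LieSubmodule.lieIdeal_oper_eq_linear_span'] at hm
      refine Submodule.span_induction ?_ ?_ ?_ ?_ hm
      · intro x hx
        exact AddSubmonoid.subset_closure hx
      · exact zero_mem _
      · intro a b _ _ ha hb
        exact add_mem ha hb
      · intro c a _ ha
        refine AddSubmonoid.closure_induction ?_ ?_ ?_ ha
        · rintro t ⟨x, hx, y, hy, rfl⟩
          rw [← lie_smul]
          refine AddSubmonoid.subset_closure ⟨x, hx, _, ?_, rfl⟩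
          exact (LieSubmodule.mem_toSubmodule _).1
            (Submodule.smul_mem (LieSubmodule.toSubmodule D) c
              ((LieSubmodule.mem_toSubmodule _).2 hy))
        · rw [_root_.smul_zero]; exact zero_mem _
        · intro a b _ _ ha hb
          rw [_root_.smul_add]; exact add_mem ha hb
    -- (A2) conversely the closure of T is contained in the derived ideal
    have hA2 : ∀ m ∈ AddSubmonoid.closure T,
        m ∈ LieAlgebra.derivedSeries (Quot (Relation.TransGen H.alphaRel))
          (Quot (Relation.TransGen (H.SRel n))) (i + 1) := by
      letI : Module (Quot (Relation.TransGen H.alphaRel))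
        (Quot (Relation.TransGen (H.SRel n))) := lieAlg.toModule
      intro m hm
      rw [hsucc]
      refine AddSubmonoid.closure_induction ?_ ?_ ?_ hm
      · rintro t ⟨x, hx, y, hy, rfl⟩
        exact LieSubmodule.lie_mem_lie hx hy
      · exact zero_mem _
      · intro a b _ _ ha hb
        exact add_mem ha hb
    -- (B1) the span of the image is contained in the closure of T
    have hB1 : ∀ m ∈ Submodule.span (Quot (Relation.TransGen H.alphaRel))
        (Quot.mk (Relation.TransGen (H.SRel n)) '' H.derivedSet (i + 1)),
        m ∈ AddSubmonoid.closure T := by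
      intro m hm
      refine Submodule.span_induction ?_ ?_ ?_ ?_ hm
      · rintro x ⟨h, hh, rfl⟩
        have hh' : h ∈ ext2 H.bracket (H.derivedSet i) (H.derivedSet i) := hh
        simp only [ext2, Set.mem_iUnion] at hh'
        obtain ⟨a, ha, b, hb, hab⟩ := hh'
        refine AddSubmonoid.subset_closure
          ⟨Quot.mk (Relation.TransGen (H.SRel n)) a,
            (ihmem _).2 (Submodule.subset_span ⟨a, ha, rfl⟩),
            Quot.mk (Relation.TransGen (H.SRel n)) b,
            (ihmem _).2 (Submodule.subset_span ⟨b, hb, rfl⟩),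
            hbracket a b h hab⟩
      · exact zero_mem _
      · intro a b _ _ ha hb
        exact add_mem ha hb
      · intro c a _ ha
        refine AddSubmonoid.closure_induction ?_ ?_ ?_ ha
        · rintro t ⟨x, hx, y, hy, rfl⟩
          rw [← hls]
          refine AddSubmonoid.subset_closure ⟨x, hx, c • y, ?_, rfl⟩
          rw [ihmem] at hy ⊢
          exact Submodule.smul_mem _ _ hy
        · rw [_root_.smul_zero]; exact zero_mem _
        · intro a b _ _ ha hb
          rw [_root_.smul_add]; exact add_mem ha hb
    -- (B2) the closure of T is contained in the span of the image
    have hB2 : ∀ m ∈ AddSubmonoid.closure T,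
        m ∈ Submodule.span (Quot (Relation.TransGen H.alphaRel))
          (Quot.mk (Relation.TransGen (H.SRel n)) '' H.derivedSet (i + 1)) := by
      intro m hm
      refine AddSubmonoid.closure_induction ?_ ?_ ?_ hm
      · intro t ht
        exact hTspan ht
      · exact zero_mem _
      · intro a b _ _ ha hb
        exact add_mem ha hb
    ext x
    simp only [SetLike.mem_coe]
    exact ⟨fun hx => hB2 x (hA1 x hx), fun hx => hA2 x (hB1 x hx)⟩
end

section
/- Let L be a Lie hyperalgebra over a hyperfield F with L/L* finite dimensional (char(F/α*) ≠ 2), and let ξ be any equivalence relation on L such that L/ξ (with the induced operations) is a solvable Lie algebra and (L/ξ, ⊕) is an abelian group. Then S = ⋂_{n≥1} S_n* ⊆ ξ. In particular, S is the smallest equivalence relation on L whose quotient is a solvable Lie algebra. -/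
/-- The relation `𝒮 = ⋂_{n ≥ 1} 𝒮ₙ*` on a Lie hyperalgebra. -/
def LieHyperalgebra.SInt {F L : Type*} (H : LieHyperalgebra F L) (x y : L) : Prop :=
  ∀ n : ℕ, 1 ≤ n → Relation.TransGen (H.SRel n) x y


section SIntAux

open LieHyperalgebra

private lemma hsumSet_val' {α β : Type*} [AddCommMonoid β] (f : α → α → Set α) (q : α → β)
    (hq : ∀ a b : α, ∀ c ∈ f a b, q a + q b = q c) :
    ∀ {t : ℕ} (A : Fin (t + 1) → Set α) (v : Fin (t + 1) → β),
      (∀ i, ∀ a ∈ A i, q a = v i) → ∀ c ∈ hsumSet f A, q c = ∑ i, v i := by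
  intro t
  induction t with
  | zero =>
    intro A v hA c hc
    rw [Fin.sum_univ_one]
    exact hA 0 c hc
  | succ t ih =>
    intro A v hA c hc
    simp only [hsumSet, ext2, Set.mem_iUnion] at hc
    obtain ⟨a, ha, b, hb, hc⟩ := hc
    rw [Fin.sum_univ_succ, ← hq a b c hc, hA 0 a ha,
      ih (A ∘ Fin.succ) (v ∘ Fin.succ) (fun i x hx => hA i.succ x hx) b hb]
    rfl

private lemma hprod_val' {α β : Type*} [CommMonoid β] (f : α → α → Set α) (q : α → β)
    (hq : ∀ a b : α, ∀ c ∈ f a b, q a * q b = q c) :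
    ∀ {t : ℕ} (lam : Fin (t + 1) → α), ∀ c ∈ hprod f lam, q c = ∏ i, q (lam i) := by
  intro t
  induction t with
  | zero =>
    intro lam c hc
    rw [Fin.prod_univ_one]
    simp only [hprod, Set.mem_singleton_iff] at hc
    rw [hc]
  | succ t ih =>
    intro lam c hc
    simp only [hprod, ext2, Set.mem_iUnion, Set.mem_singleton_iff] at hc
    obtain ⟨a, ha, b, hb, hc⟩ := hc
    subst ha
    rw [Fin.prod_univ_succ, ← hq _ b c hc, ih (lam ∘ Fin.succ) b hb]
    rfl

/-- Abstract evaluation of a bracket expression in a type with a bracket. -/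
private def evalAbs {β : Type*} [Bracket β β] : ∀ {m : ℕ}, BExpr m → (Fin m → β) → β
  | _, .leaf j, w => w j
  | _, .br e₁ e₂, w => ⁅evalAbs e₁ w, evalAbs e₂ w⁆

private lemma evalB_val {F L β : Type*} [Bracket β β] (H : LieHyperalgebra F L) (Q : L → β)
    (hb : ∀ x y : L, ∀ z ∈ H.bracket x y, ⁅Q x, Q y⁆ = Q z) :
    ∀ {m : ℕ} (e : BExpr m) (g : Fin m → Set L) (w : Fin m → β),
      (∀ j, ∀ z ∈ g j, Q z = w j) → ∀ z ∈ H.evalBExpr e g, Q z = evalAbs e w := by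
  intro m e
  induction e with
  | leaf j =>
    intro g w hg z hz
    simp only [evalAbs]
    exact hg j z (by simpa only [LieHyperalgebra.evalBExpr] using hz)
  | br e₁ e₂ ih₁ ih₂ =>
    intro g w hg z hz
    simp only [LieHyperalgebra.evalBExpr, ext2, Set.mem_iUnion] at hz
    obtain ⟨a, ha, b, hb', hz⟩ := hz
    simp only [evalAbs]
    rw [← hb a b z hz, ih₁ g w hg a ha, ih₂ g w hg b hb']

end SIntAux

/-- Minimality of `𝒮`: if `L/ℒ*` is finite dimensional (and `char(F/α*) ≠ 2`) and `ξ` is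
any equivalence relation on `L` such that the quotient `L/ξ` with the induced operations
is a solvable Lie algebra (in particular `(L/ξ, ⊕)` is an abelian group), then
`𝒮 = ⋂_{n≥1} 𝒮ₙ* ⊆ ξ`.  In particular `𝒮` is the smallest equivalence relation on `L`
whose quotient is a solvable Lie algebra. -/
theorem LieHyperalgebra.SInt_smallest {F L : Type*} (H : LieHyperalgebra F L)
    [fQ : Field (Quot (Relation.TransGen H.alphaRel))]
    (hfadd : ∀ a b : F, ∀ c ∈ H.fadd a b,
      Quot.mk (Relation.TransGen H.alphaRel) a + Quot.mk (Relation.TransGen H.alphaRel) b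
        = Quot.mk (Relation.TransGen H.alphaRel) c)
    (hfmul : ∀ a b : F, ∀ c ∈ H.fmul a b,
      Quot.mk (Relation.TransGen H.alphaRel) a * Quot.mk (Relation.TransGen H.alphaRel) b
        = Quot.mk (Relation.TransGen H.alphaRel) c)
    (hchar : (2 : Quot (Relation.TransGen H.alphaRel)) ≠ 0)
    [lieRing0 : LieRing (Quot (Relation.TransGen H.LRel))]
    [module0 : Module (Quot (Relation.TransGen H.alphaRel)) (Quot (Relation.TransGen H.LRel))]
    [lieAlg0 : LieAlgebra (Quot (Relation.TransGen H.alphaRel))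
      (Quot (Relation.TransGen H.LRel))]
    (hadd0 : ∀ x y : L, ∀ z ∈ H.add x y,
      Quot.mk (Relation.TransGen H.LRel) x + Quot.mk (Relation.TransGen H.LRel) y
        = Quot.mk (Relation.TransGen H.LRel) z)
    (hsmul0 : ∀ (a : F) (x : L), ∀ z ∈ H.smul a x,
      Quot.mk (Relation.TransGen H.alphaRel) a • Quot.mk (Relation.TransGen H.LRel) x
        = Quot.mk (Relation.TransGen H.LRel) z)
    (hbracket0 : ∀ x y : L, ∀ z ∈ H.bracket x y,
      ⁅Quot.mk (Relation.TransGen H.LRel) x, Quot.mk (Relation.TransGen H.LRel) y⁆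
        = Quot.mk (Relation.TransGen H.LRel) z)
    [fin0 : FiniteDimensional (Quot (Relation.TransGen H.alphaRel))
      (Quot (Relation.TransGen H.LRel))]
    (ξ : L → L → Prop) (hξe : Equivalence ξ)
    [lieRingξ : LieRing (Quot ξ)]
    [moduleξ : Module (Quot (Relation.TransGen H.alphaRel)) (Quot ξ)]
    [lieAlgξ : LieAlgebra (Quot (Relation.TransGen H.alphaRel)) (Quot ξ)]
    (haddξ : ∀ x y : L, ∀ z ∈ H.add x y, Quot.mk ξ x + Quot.mk ξ y = Quot.mk ξ z)
    (hsmulξ : ∀ (a : F) (x : L), ∀ z ∈ H.smul a x,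
      Quot.mk (Relation.TransGen H.alphaRel) a • Quot.mk ξ x = Quot.mk ξ z)
    (hbracketξ : ∀ x y : L, ∀ z ∈ H.bracket x y,
      ⁅Quot.mk ξ x, Quot.mk ξ y⁆ = Quot.mk ξ z)
    [solv : LieAlgebra.IsSolvable (Quot ξ)] :
    ∀ x y : L, H.SInt x y → ξ x y := by
  intro x y hxy
  obtain ⟨n, hn⟩ := LieAlgebra.IsSolvable.solvable (Quot (Relation.TransGen H.alphaRel)) (Quot ξ)
  -- derived sets map into the derived series of the quotient
  have hderzero : ∀ h ∈ H.derivedSet n, Quot.mk ξ h = 0 := by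
    letI : Module (Quot (Relation.TransGen H.alphaRel)) (Quot ξ) := lieAlgξ.toModule
    have hder : ∀ k : ℕ, ∀ h ∈ H.derivedSet k,
        Quot.mk ξ h ∈ LieAlgebra.derivedSeries (Quot (Relation.TransGen H.alphaRel)) (Quot ξ) k := by
      intro k
      induction k with
      | zero =>
        intro h _
        rw [LieAlgebra.derivedSeries_def, LieAlgebra.derivedSeriesOfIdeal_zero]
        exact LieSubmodule.mem_top _
      | succ k ih =>
        intro h hh
        simp only [LieHyperalgebra.derivedSet, ext2, Set.mem_iUnion] at hh
        obtain ⟨a, ha, b, hb, hh⟩ := hh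
        have hstep : LieAlgebra.derivedSeries (Quot (Relation.TransGen H.alphaRel)) (Quot ξ) (k+1)
            = ⁅LieAlgebra.derivedSeries (Quot (Relation.TransGen H.alphaRel)) (Quot ξ) k,
               LieAlgebra.derivedSeries (Quot (Relation.TransGen H.alphaRel)) (Quot ξ) k⁆ := by
          simp only [LieAlgebra.derivedSeries_def, LieAlgebra.derivedSeriesOfIdeal_succ]
        rw [hstep, ← hbracketξ a b h hh]
        exact LieSubmodule.lie_mem_lie (ih a ha) (ih b hb)
    intro h hmem
    have hh := hder n h hmem
    rw [hn] at hh
    simpa using hh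
  have key : ∀ a b : L, H.SRel (n+1) a b → Quot.mk ξ a = Quot.mk ξ b := by
    rintro a b ⟨d, ha, hb⟩
    simp only [LieHyperalgebra.SData.lhs] at ha
    simp only [LieHyperalgebra.SData.rhs] at hb
    -- value of the scalar sums
    have hg : ∀ i (j : Fin (d.m i + 1)), ∀ z ∈ d.g i j,
        Quot.mk ξ z = (∑ k, ∏ r, Quot.mk (Relation.TransGen H.alphaRel) (d.lam i j k r))
          • Quot.mk ξ (d.h i j) := by
      intro i j z hz
      simp only [LieHyperalgebra.SData.g, Set.mem_iUnion] at hz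
      obtain ⟨c, hc, hz⟩ := hz
      have hcv : Quot.mk (Relation.TransGen H.alphaRel) c
          = ∑ k, ∏ r, Quot.mk (Relation.TransGen H.alphaRel) (d.lam i j k r) :=
        hsumSet_val' H.fadd _ hfadd _ _
          (fun k a hka => hprod_val' H.fmul _ hfmul _ a hka) c hc
      rw [← hsmulξ c _ z hz, hcv]
    have hA : ∀ i (j : Fin (d.m i + 1)), ∀ c ∈ d.A i j,
        Quot.mk (Relation.TransGen H.alphaRel) c
          = ∑ k, ∏ r, Quot.mk (Relation.TransGen H.alphaRel) (d.lam i j k r) := by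
      intro i j c hc
      have h1 := hsumSet_val' H.fadd _ hfadd _
        (fun k => ∏ r, Quot.mk (Relation.TransGen H.alphaRel) (d.lam i j (d.σij i j k) r))
        (fun k a hka => by
          rw [hprod_val' H.fmul _ hfmul _ a hka]
          exact Equiv.prod_comp (d.σijk i j (d.σij i j k))
            (fun r => Quot.mk (Relation.TransGen H.alphaRel) (d.lam i j (d.σij i j k) r)))
        c hc
      rw [h1]
      exact Equiv.sum_comp (d.σij i j)
        (fun k => ∏ r, Quot.mk (Relation.TransGen H.alphaRel) (d.lam i j k r))
    have hg' : ∀ i (j : Fin (d.m (d.σ i) + 1)), ∀ z ∈ d.g' i j,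
        Quot.mk ξ z = (∑ k, ∏ r, Quot.mk (Relation.TransGen H.alphaRel)
            (d.lam (d.σ i) (d.σi (d.σ i) j) k r))
          • Quot.mk ξ (d.h (d.σ i) (d.σi (d.σ i) j)) := by
      intro i j z hz
      simp only [LieHyperalgebra.SData.g', Set.mem_iUnion] at hz
      obtain ⟨c, hc, hz⟩ := hz
      rw [← hsmulξ c _ z hz, hA _ _ c hc]
    -- summands whose permutation moves them vanish
    have hzero : ∀ i (j : Fin (d.m i + 1)), d.σi i j ≠ j → Quot.mk ξ (d.h i j) = 0 := by
      intro i j hj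
      have hmem : d.h i j ∈ H.derivedSet n := by
        by_contra hcon
        exact hj (d.σi_fix i j hcon)
      exact hderzero _ hmem
    have hW' : ∀ i (j : Fin (d.m (d.σ i) + 1)),
        (∑ k, ∏ r, Quot.mk (Relation.TransGen H.alphaRel)
            (d.lam (d.σ i) (d.σi (d.σ i) j) k r))
          • Quot.mk ξ (d.h (d.σ i) (d.σi (d.σ i) j))
        = (∑ k, ∏ r, Quot.mk (Relation.TransGen H.alphaRel) (d.lam (d.σ i) j k r))
          • Quot.mk ξ (d.h (d.σ i) j) := by
      intro i j
      by_cases hj : d.σi (d.σ i) j = j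
      · rw [hj]
      · have h1 : Quot.mk ξ (d.h (d.σ i) j) = 0 := hzero _ j hj
        have h2 : Quot.mk ξ (d.h (d.σ i) (d.σi (d.σ i) j)) = 0 := by
          apply hzero
          intro hcon
          exact hj ((d.σi (d.σ i)).injective hcon)
        rw [h1, h2, smul_zero, smul_zero]
    have hQa : Quot.mk ξ a = ∑ i, evalAbs (d.f i)
        (fun j => (∑ k, ∏ r, Quot.mk (Relation.TransGen H.alphaRel) (d.lam i j k r))
          • Quot.mk ξ (d.h i j)) :=
      hsumSet_val' H.add _ haddξ _ _
        (fun i z hz => evalB_val H _ hbracketξ (d.f i) (d.g i) _ (fun j => hg i j) z hz)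
        a ha
    have hQb : Quot.mk ξ b = ∑ i, evalAbs (d.f (d.σ i))
        (fun j => (∑ k, ∏ r, Quot.mk (Relation.TransGen H.alphaRel) (d.lam (d.σ i) j k r))
          • Quot.mk ξ (d.h (d.σ i) j)) := by
      refine hsumSet_val' H.add _ haddξ _ _ (fun i z hz => ?_) b hb
      have h3 := evalB_val H _ hbracketξ (d.f (d.σ i)) (d.g' i)
        (fun j => (∑ k, ∏ r, Quot.mk (Relation.TransGen H.alphaRel)
            (d.lam (d.σ i) (d.σi (d.σ i) j) k r))
          • Quot.mk ξ (d.h (d.σ i) (d.σi (d.σ i) j)))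
        (fun j => hg' i j) z hz
      rw [h3]
      congr 1
      exact funext (hW' i)
    rw [hQa, hQb]
    exact (Equiv.sum_comp d.σ (fun i => evalAbs (d.f i)
      (fun j => (∑ k, ∏ r, Quot.mk (Relation.TransGen H.alphaRel) (d.lam i j k r))
        • Quot.mk ξ (d.h i j)))).symm
  have h1 : Relation.TransGen (H.SRel (n+1)) x y := hxy (n+1) (Nat.le_add_left 1 n)
  clear hxy
  have h2 : Quot.mk ξ x = Quot.mk ξ y := by
    induction h1 with
    | single h => exact key _ _ h
    | tail _ h ih => exact ih.trans (key _ _ h)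
  exact hξe.eqvGen_iff.mp (Quot.eq.mp h2)
end

section
/- Let L be a Lie hyperalgebra, K ⊆ L nonempty, and n ≥ 1. Then the following are equivalent: (i) K is an S_n-part of L; (ii) for all x, y ∈ L, x ∈ K and x S_n y imply y ∈ K; (iii) for all x, y ∈ L, x ∈ K and x S_n* y imply y ∈ K. -/
/-- A nonempty subset `K` of a Lie hyperalgebra is an `𝒮ₙ`-part if whenever a sum of
hyperbracket-function expressions `Σ ℓᵢ` meets `K`, every admissibly permuted version
`Σ ℓ'ᵢ` is contained in `K`. -/
def LieHyperalgebra.IsSnPart {F L : Type*} (H : LieHyperalgebra F L) (n : ℕ)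
    (K : Set L) : Prop :=
  ∀ d : LieHyperalgebra.SData H n, (d.lhs ∩ K).Nonempty → d.rhs ⊆ K

/-- For a nonempty subset `K` of a Lie hyperalgebra `L` and `n ≥ 1`, the following are
equivalent: (i) `K` is an `𝒮ₙ`-part of `L`; (ii) `x ∈ K` and `x 𝒮ₙ y` imply `y ∈ K`;
(iii) `x ∈ K` and `x 𝒮ₙ* y` imply `y ∈ K`. -/
theorem LieHyperalgebra.isSnPart_iff {F L : Type*} (H : LieHyperalgebra F L) (n : ℕ)
    (hn : 1 ≤ n) (K : Set L) (hK : K.Nonempty) :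
    (H.IsSnPart n K ↔ ∀ x y : L, x ∈ K → H.SRel n x y → y ∈ K) ∧
    ((∀ x y : L, x ∈ K → H.SRel n x y → y ∈ K) ↔
      ∀ x y : L, x ∈ K → Relation.TransGen (H.SRel n) x y → y ∈ K) := by
  constructor
  · constructor
    · intro hpart x y hx ⟨d, hxl, hyr⟩
      exact hpart d ⟨x, hxl, hx⟩ hyr
    · intro h d ⟨x, hxl, hxK⟩ y hy
      exact h x y hxK ⟨d, hxl, hy⟩
  · constructor
    · intro h x y hx ht
      induction ht with
      | single hs => exact h _ _ hx hs
      | tail _ hs ih => exact h _ _ ih hs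
    · intro h x y hx hs
      exact h x y hx (Relation.TransGen.single hs)
end
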